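/- arXiv:2311.16057 — 2 statements merged into one kernel-verified Lean document; each statement's English description precedes it below -/
import Mathlib

section
/- Let B be a finite set equipped with a partial order, let ℓ ≥ 0, and let T = {s ∈ ℕ^B : Σ_b s(b) = ℓ}. Define the matrix P indexed by T × T by P[s,s'] = ∏_{b∈B} binom(Σ_{b'≥b} s'(b') − Σ_{b'>b} s(b'), s(b)) (where a binomial coefficient with negative top argument is 0). Then P is invertible over ℂ with determinant 1. -/
open Finset

/-- Binomial coefficient with an integer top argument, which is `0` when the top
argument is negative. -/
def intBinom (a : ℤ) (k : ℕ) : ℕ := if a < 0 then 0 else a.toNat.choose k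

/-- The matrix `P` indexed by `T = {s ∈ ℕ^B : Σ_b s(b) = ℓ}` with
`P[s,s'] = ∏_{b∈B} binom(Σ_{b'≥b} s'(b') − Σ_{b'>b} s(b'), s(b))`. -/
noncomputable def overcountMatrix {B : Type*} [Fintype B] [DecidableEq B] [PartialOrder B]
    [DecidableRel ((· ≤ ·) : B → B → Prop)] (ℓ : ℕ)
    [Fintype {s : B → ℕ // ∑ b, s b = ℓ}] :
    Matrix {s : B → ℕ // ∑ b, s b = ℓ} {s : B → ℕ // ∑ b, s b = ℓ} ℂ :=
  Matrix.of fun s s' =>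
    ((∏ b, intBinom
        ((∑ b' ∈ Finset.univ.filter (fun b' => b ≤ b'), (s'.1 b' : ℤ)) -
          ∑ b' ∈ Finset.univ.filter (fun b' => b ≤ b' ∧ b ≠ b'), (s.1 b' : ℤ))
        (s.1 b) : ℕ) : ℂ)

section Aux

variable {B : Type*} [Fintype B] [DecidableEq B] [PartialOrder B]
    [DecidableRel ((· ≤ ·) : B → B → Prop)]

/-- Sum of `s` over the up-set of `b`. -/
private def upSum (s : B → ℕ) (b : B) : ℕ := ∑ b' ∈ univ.filter (fun b' => b ≤ b'), s b'

/-- Sum of `s` over the strict up-set of `b`. -/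
private def strictUpSum (s : B → ℕ) (b : B) : ℕ :=
  ∑ b' ∈ univ.filter (fun b' => b ≤ b' ∧ b ≠ b'), s b'

private lemma upSum_split (s : B → ℕ) (b : B) : upSum s b = s b + strictUpSum s b := by
  unfold upSum strictUpSum
  have hset : (univ.filter (fun b' => b ≤ b')) =
      insert b (univ.filter (fun b' => b ≤ b' ∧ b ≠ b')) := by
    ext x
    simp only [mem_filter, mem_univ, true_and, mem_insert]
    constructor
    · intro hx
      rcases eq_or_ne b x with h | h
      · exact Or.inl h.symm
      · exact Or.inr ⟨hx, h⟩
    · rintro (rfl | ⟨h, _⟩) <;> [exact le_refl x; exact h]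
  rw [hset, Finset.sum_insert (by simp)]

private lemma upSum_injective {s s' : B → ℕ} (h : ∀ b, upSum s b = upSum s' b) : s = s' := by
  funext b
  induction b using WellFoundedGT.induction with
  | _ x ih =>
    have h1 := h x
    rw [upSum_split, upSum_split] at h1
    have h2 : strictUpSum s x = strictUpSum s' x := by
      unfold strictUpSum
      refine Finset.sum_congr rfl fun y hy => ?_
      simp only [mem_filter, mem_univ, true_and] at hy
      exact ih y (lt_of_le_of_ne hy.1 hy.2)
    omega

private lemma intBinom_ne_zero {a : ℤ} {k : ℕ} (h : intBinom a k ≠ 0) : (k : ℤ) ≤ a := by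
  unfold intBinom at h
  split at h
  · exact absurd rfl h
  · rename_i ha
    push_neg at ha
    have hk : k ≤ a.toNat := by
      by_contra hk
      exact h (Nat.choose_eq_zero_of_lt (by omega))
    omega

end Aux

section Main

variable {B : Type*} [Fintype B] [DecidableEq B] [PartialOrder B]
    [DecidableRel ((· ≤ ·) : B → B → Prop)] (ℓ : ℕ)
    [Fintype {s : B → ℕ // ∑ b, s b = ℓ}]

omit [Fintype {s : B → ℕ // ∑ b, s b = ℓ}] in
private lemma entry_factor (s s' : {s : B → ℕ // ∑ b, s b = ℓ}) (b : B) :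
    ((∑ b' ∈ Finset.univ.filter (fun b' => b ≤ b'), (s'.1 b' : ℤ)) -
        ∑ b' ∈ Finset.univ.filter (fun b' => b ≤ b' ∧ b ≠ b'), (s.1 b' : ℤ)) =
      (upSum s'.1 b : ℤ) - (strictUpSum s.1 b : ℤ) := by
  unfold upSum strictUpSum
  push_cast
  ring

private lemma diag_one (s : {s : B → ℕ // ∑ b, s b = ℓ}) :
    overcountMatrix (B := B) ℓ s s = 1 := by
  unfold overcountMatrix
  simp only [Matrix.of_apply]
  have : ∀ b : B, intBinom
      ((∑ b' ∈ Finset.univ.filter (fun b' => b ≤ b'), (s.1 b' : ℤ)) -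
        ∑ b' ∈ Finset.univ.filter (fun b' => b ≤ b' ∧ b ≠ b'), (s.1 b' : ℤ)) (s.1 b) = 1 := by
    intro b
    rw [entry_factor]
    have hs := upSum_split s.1 b
    have : (upSum s.1 b : ℤ) - (strictUpSum s.1 b : ℤ) = (s.1 b : ℤ) := by omega
    rw [this]
    unfold intBinom
    simp [Nat.choose_self]
  rw [Finset.prod_congr rfl (fun b _ => this b)]
  simp

private lemma entry_ne_zero_imp (s s' : {s : B → ℕ // ∑ b, s b = ℓ})
    (h : overcountMatrix (B := B) ℓ s s' ≠ 0) : ∀ b, upSum s.1 b ≤ upSum s'.1 b := by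
  intro b
  unfold overcountMatrix at h
  simp only [Matrix.of_apply, Nat.cast_ne_zero] at h
  rw [Finset.prod_ne_zero_iff] at h
  have hb := h b (mem_univ b)
  rw [entry_factor] at hb
  have := intBinom_ne_zero hb
  have hs := upSum_split s.1 b
  omega

end Main

set_option linter.unusedSectionVars false in
/-- The over-counting matrix `P` is invertible over `ℂ` with determinant `1`. -/
theorem overcountMatrix_det_eq_one {B : Type*} [Fintype B] [DecidableEq B] [PartialOrder B]
    [DecidableRel ((· ≤ ·) : B → B → Prop)] (ℓ : ℕ)
    [Fintype {s : B → ℕ // ∑ b, s b = ℓ}] :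
    (overcountMatrix (B := B) ℓ).det = 1 ∧ IsUnit (overcountMatrix (B := B) ℓ) := by
  have hdet : (overcountMatrix (B := B) ℓ).det = 1 := by
    rw [Matrix.det_apply]
    rw [Finset.sum_eq_single (1 : Equiv.Perm {s : B → ℕ // ∑ b, s b = ℓ})]
    · simp only [Equiv.Perm.sign_one, one_smul, Equiv.Perm.one_apply]
      rw [Finset.prod_congr rfl (fun i _ => diag_one ℓ i)]
      simp
    · intro σ _ hσ
      by_contra hne
      have hprod : ∏ i, overcountMatrix (B := B) ℓ (σ i) i ≠ 0 := by
        intro h0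
        apply hne
        rw [h0, smul_zero]
      rw [Finset.prod_ne_zero_iff] at hprod
      set f : {s : B → ℕ // ∑ b, s b = ℓ} → (B → ℕ) := fun i => upSum i.1 with hf
      have hle : ∀ i, f (σ i) ≤ f i := fun i b =>
        entry_ne_zero_imp ℓ (σ i) i (hprod i (mem_univ i)) b
      have hsum : ∑ i, f (σ i) = ∑ i, f i := Equiv.sum_comp σ f
      have heq := (Finset.sum_eq_sum_iff_of_le (fun i _ => hle i)).mp hsum
      apply hσ
      ext i b
      have h1 : (σ i).1 = i.1 :=
        upSum_injective (fun b => congrFun (heq i (mem_univ i)) b)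
      exact congrFun h1 b
    · intro h; exact absurd (mem_univ _) h
  exact ⟨hdet, by rw [Matrix.isUnit_iff_isUnit_det, hdet]; exact isUnit_one⟩
end

section
/- Let u, v be complex unit vectors and let A_1, ..., A_m be complex matrices of compatible dimensions with operator norms ||A_i|| ≤ c_i. Then |u† A_1 A_2 ··· A_m v| ≤ ∏_{i=1}^m c_i. In particular, if h(s) can be written as u† Q_1 R_1 ··· W ··· Q_d' v with the stated norm bounds ||Q_i|| ≤ sqrt(∏_{b: b_{≤i}=0^{i-1}1} binom(t, s(b))), ||R_i|| ≤ 1, ||W|| ≤ sqrt(∏_{b: b_{≤r}=0^r} binom(ñ, s(b)) · ∏_{b: b_{≥r}=0^{d-r+1}} binom(ñ, s(b))), then |h(s)| ≤ t^ℓ · (ñ/t)^{e_r/2} where e_r = Σ_{b: b_{≤r}=0^r} s(b) + Σ_{b: b_{≥r}=0^{d-r+1}} s(b) and Σ_b s(b) = ℓ, assuming t ≤ ñ. -/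
open Matrix Finset
open scoped Matrix.Norms.L2Operator

/-- The product `M_1 * M_2 * ⋯ * M_k` of a chain of rectangular matrices with compatible
dimensions (empty product is the identity). -/
noncomputable def matChain (n : ℕ → ℕ)
    (M : ∀ i, Matrix (Fin (n i)) (Fin (n (i + 1))) ℂ) :
    ∀ k, Matrix (Fin (n 0)) (Fin (n k)) ℂ
  | 0 => 1
  | k + 1 => matChain n M k * M k

/-- Odd-Hamming-weight binary strings of length `d`. -/
def OddB (d : ℕ) := {b : Fin d → Bool // Odd (Finset.univ.filter fun j => b j = true).card}

/-- `b_{≤r} = 0^r` : the first `r` coordinates of `b` vanish (1-indexed). -/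
def lowZero {d : ℕ} (r : ℕ) (b : OddB d) : Prop :=
  ∀ j : Fin d, (j : ℕ) + 1 ≤ r → b.1 j = false

/-- `b_{≥r} = 0^{d-r+1}` : coordinates `r` through `d` of `b` vanish (1-indexed). -/
def tailZero {d : ℕ} (r : ℕ) (b : OddB d) : Prop :=
  ∀ j : Fin d, r ≤ (j : ℕ) + 1 → b.1 j = false

instance {d r : ℕ} : DecidablePred (lowZero (d := d) r) := fun _ =>
  Fintype.decidableForallFintype
instance {d r : ℕ} : DecidablePred (tailZero (d := d) r) := fun _ =>
  Fintype.decidableForallFintype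
noncomputable instance {d : ℕ} : Fintype (OddB d) := Subtype.fintype _

private lemma abs_dot_le_norm (a b : ℕ) (A : Matrix (Fin a) (Fin b) ℂ)
    (u : Fin a → ℂ) (v : Fin b → ℂ)
    (hu : ∑ i, ‖u i‖ ^ 2 = 1) (hv : ∑ j, ‖v j‖ ^ 2 = 1) :
    ‖star u ⬝ᵥ A.mulVec v‖ ≤ ‖A‖ := by
  have h1 : star u ⬝ᵥ A.mulVec v =
      inner ℂ ((WithLp.equiv 2 (Fin a → ℂ)).symm u)
        ((WithLp.equiv 2 (Fin a → ℂ)).symm (A.mulVec v)) := by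
    simp [EuclideanSpace.inner_eq_star_dotProduct, dotProduct_comm]
  have hun : ‖(WithLp.equiv 2 (Fin a → ℂ)).symm u‖ = 1 := by
    rw [EuclideanSpace.norm_eq]
    simp [hu]
  have hvn : ‖(WithLp.equiv 2 (Fin b → ℂ)).symm v‖ = 1 := by
    rw [EuclideanSpace.norm_eq]
    simp [hv]
  calc ‖star u ⬝ᵥ A.mulVec v‖
      ≤ ‖(WithLp.equiv 2 (Fin a → ℂ)).symm u‖ *
        ‖(WithLp.equiv 2 (Fin a → ℂ)).symm (A.mulVec v)‖ := by
        rw [h1]; exact norm_inner_le_norm _ _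
    _ ≤ 1 * (‖A‖ * 1) := by
        rw [hun]
        refine mul_le_mul_of_nonneg_left ?_ zero_le_one
        have := A.l2_opNorm_mulVec ((WithLp.equiv 2 (Fin b → ℂ)).symm v)
        rwa [hvn] at this
    _ = ‖A‖ := by ring

private lemma matChain_norm_le (n : ℕ → ℕ)
    (M : ∀ i, Matrix (Fin (n i)) (Fin (n (i + 1))) ℂ) (c : ℕ → ℝ)
    (hM : ∀ i, ‖M i‖ ≤ c i) (k : ℕ) :
    ‖matChain n M k‖ ≤ ∏ i ∈ Finset.range k, c i := by
  induction k with
  | zero =>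
    simp only [matChain, Finset.range_zero, Finset.prod_empty]
    rw [Matrix.cstar_norm_def, _root_.map_one]
    exact ContinuousLinearMap.norm_id_le
  | succ k ih =>
    rw [Finset.prod_range_succ]
    calc ‖matChain n M (k + 1)‖ ≤ ‖matChain n M k‖ * ‖M k‖ :=
          Matrix.l2_opNorm_mul _ _
      _ ≤ (∏ i ∈ Finset.range k, c i) * c k :=
          mul_le_mul ih (hM k) (norm_nonneg _)
            (le_trans (norm_nonneg _) ih)

private lemma sqrt_bound (t nn ℓ a1 a2 b1 b2 : ℕ) (ht : 1 ≤ t)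
    (h1 : a1 + b1 = ℓ) (h2 : a2 + b2 = ℓ)
    (P1 P2 P3 P4 : ℝ)
    (hp1 : P1 ≤ (t:ℝ)^a1) (hp2 : P2 ≤ (t:ℝ)^a2)
    (hp3 : P3 ≤ (nn:ℝ)^b1) (hp4 : P4 ≤ (nn:ℝ)^b2)
    (n2 : 0 ≤ P2) (n3 : 0 ≤ P3) (n4 : 0 ≤ P4) :
    Real.sqrt (P1 * P2 * P3 * P4) ≤
      (t:ℝ)^ℓ * Real.sqrt (((nn:ℝ)/t)^(b1+b2)) := by
  have ht0 : (0:ℝ) < t := by exact_mod_cast ht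
  have hn0 : (0:ℝ) ≤ nn := by positivity
  have key : (t:ℝ)^ℓ * Real.sqrt (((nn:ℝ)/t)^(b1+b2)) =
      Real.sqrt ((t:ℝ)^a1 * (t:ℝ)^a2 * (nn:ℝ)^b1 * (nn:ℝ)^b2) := by
    rw [show (t:ℝ)^ℓ = Real.sqrt (((t:ℝ)^ℓ)^2) by
      rw [Real.sqrt_sq (by positivity)]]
    rw [← Real.sqrt_mul (by positivity)]
    congr 1
    rw [div_pow]
    field_simp
    rw [← pow_mul, show ℓ * 2 = (a1 + a2) + (b1 + b2) by omega, pow_add, pow_add, pow_add]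
    ring
  rw [key]
  apply Real.sqrt_le_sqrt
  have := mul_le_mul (mul_le_mul (mul_le_mul hp1 hp2 n2 (by positivity)) hp3 n3
    (by positivity)) hp4 n4 (by positivity)
  linarith

private lemma prod_choose_le (t : ℕ) (d : ℕ) (s : OddB d → ℕ) (S : Finset (OddB d)) :
    (∏ b ∈ S, (t.choose (s b) : ℝ)) ≤ (t:ℝ) ^ (∑ b ∈ S, s b) := by
  rw [← Finset.prod_pow_eq_pow_sum]
  refine Finset.prod_le_prod (fun b _ => by positivity) (fun b _ => ?_)
  exact_mod_cast Nat.choose_le_pow t (s b)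

/-- (i) `|u† A_1 ⋯ A_k v| ≤ ∏ c_i` for unit vectors `u, v` and matrices with `‖A_i‖ ≤ c_i`;
(ii) in particular, any quantity `h(s)` bounded by the square root of the product of the
binomial norm bounds of the matrices `Q_i, R_i, W, Q_i', R_i'` is at most
`t^ℓ · √((nn/t)^{e_r})`, where `e_r = Σ_{b : b_{≤r}=0^r} s(b) + Σ_{b : b_{≥r}=0^{d-r+1}} s(b)`
and `Σ_b s(b) = ℓ`, assuming `1 ≤ t ≤ nn`. -/
theorem abs_matChain_le_prod_and_h_bound :
    (∀ (n : ℕ → ℕ) (M : ∀ i, Matrix (Fin (n i)) (Fin (n (i + 1))) ℂ) (c : ℕ → ℝ) (k : ℕ),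
      (∀ i, ‖M i‖ ≤ c i) →
      ∀ (u : Fin (n 0) → ℂ) (v : Fin (n k) → ℂ),
        (∑ i, ‖u i‖ ^ 2 = 1) → (∑ j, ‖v j‖ ^ 2 = 1) →
        ‖star u ⬝ᵥ (matChain n M k).mulVec v‖ ≤ ∏ i ∈ Finset.range k, c i) ∧
    (∀ (d r t nn ℓ : ℕ), 2 ≤ d → 1 ≤ r → r ≤ d → 1 ≤ t → t ≤ nn →
      ∀ s : OddB d → ℕ, (∑ b, s b = ℓ) →
      ∀ z : ℂ,
        ‖z‖ ≤ Real.sqrt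
          ((∏ b ∈ Finset.univ.filter (fun b : OddB d => ¬ lowZero r b),
              (t.choose (s b) : ℝ)) *
           (∏ b ∈ Finset.univ.filter (fun b : OddB d => ¬ tailZero r b),
              (t.choose (s b) : ℝ)) *
           (∏ b ∈ Finset.univ.filter (fun b : OddB d => lowZero r b),
              (nn.choose (s b) : ℝ)) *
           (∏ b ∈ Finset.univ.filter (fun b : OddB d => tailZero r b),
              (nn.choose (s b) : ℝ))) →
        ‖z‖ ≤ (t : ℝ) ^ ℓ * Real.sqrt (((nn : ℝ) / t) ^
          ((∑ b ∈ Finset.univ.filter (fun b : OddB d => lowZero r b), s b) +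
           (∑ b ∈ Finset.univ.filter (fun b : OddB d => tailZero r b), s b)))) := by
  constructor
  · intro n M c k hM u v hu hv
    exact le_trans (abs_dot_le_norm _ _ _ u v hu hv) (matChain_norm_le n M c hM k)
  · intro d r t nn ℓ _ _ _ ht htn s hs z hz
    refine le_trans hz ?_
    set a1 := ∑ b ∈ Finset.univ.filter (fun b : OddB d => ¬ lowZero r b), s b
    set a2 := ∑ b ∈ Finset.univ.filter (fun b : OddB d => ¬ tailZero r b), s b
    set b1 := ∑ b ∈ Finset.univ.filter (fun b : OddB d => lowZero r b), s b
    set b2 := ∑ b ∈ Finset.univ.filter (fun b : OddB d => tailZero r b), s b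
    have h1 : a1 + b1 = ℓ := by
      rw [add_comm, ← hs]
      exact Finset.sum_filter_add_sum_filter_not _ _ _
    have h2 : a2 + b2 = ℓ := by
      rw [add_comm, ← hs]
      exact Finset.sum_filter_add_sum_filter_not _ _ _
    refine sqrt_bound t nn ℓ a1 a2 b1 b2 ht h1 h2 _ _ _ _
      (prod_choose_le t d s _) (prod_choose_le t d s _)
      (prod_choose_le nn d s _) (prod_choose_le nn d s _)
      (Finset.prod_nonneg fun b _ => by positivity)
      (Finset.prod_nonneg fun b _ => by positivity)
      (Finset.prod_nonneg fun b _ => by positivity)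
end
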